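/- For every natural number n, the n+1 functions J_n, J_n', J_n'', …, J_n^{(n)} (the iterated derivatives of J_n of orders 0 through n) are linearly independent over ℝ as functions ℝ → ℝ; that is, they constitute a fundamental system of solutions of the associated degree-(n+1) differential equation. -/

import Mathlib

/-- The Bessel function of the first kind of (natural) order `n`. -/
noncomputable def besselJ (n : ℕ) : ℝ → ℝ := fun x =>
  ∑' k : ℕ, (-1) ^ k / ((Nat.factorial k : ℝ) * (Nat.factorial (k + n))) * (x / 2) ^ (2 * k + n)

/-- Taylor coefficients (at 0) of `besselJ n`. -/
noncomputable def besselCoeff (n m : ℕ) : ℝ :=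
  if n ≤ m ∧ 2 ∣ (m - n) then
    (-1) ^ ((m - n) / 2) /
      (((Nat.factorial ((m - n) / 2) : ℝ) * (Nat.factorial ((m - n) / 2 + n))) * 2 ^ m)
  else 0

lemma besselCoeff_apply (n k : ℕ) :
    besselCoeff n (2 * k + n) =
      (-1) ^ k / (((Nat.factorial k : ℝ) * (Nat.factorial (k + n))) * 2 ^ (2 * k + n)) := by
  have h1 : n ≤ 2 * k + n ∧ 2 ∣ (2 * k + n - n) := ⟨le_add_self, ⟨k, by omega⟩⟩
  have h2 : (2 * k + n - n) / 2 = k := by omega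
  simp [besselCoeff, h1, h2]

lemma besselCoeff_eq_zero (n m : ℕ) (hm : m ∉ Set.range (fun k => 2 * k + n)) :
    besselCoeff n m = 0 := by
  rw [besselCoeff, if_neg]
  rintro ⟨h1, k, hk⟩
  exact hm ⟨k, show 2 * k + n = m by omega⟩

lemma norm_term (n k : ℕ) (x : ℝ) :
    ‖(-1 : ℝ) ^ k / ((Nat.factorial k : ℝ) * (Nat.factorial (k + n))) * (x / 2) ^ (2 * k + n)‖
      = |x / 2| ^ (2 * k + n) / ((Nat.factorial k : ℝ) * (Nat.factorial (k + n))) := by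
  rw [Real.norm_eq_abs, abs_mul, abs_div, abs_pow, abs_pow, abs_neg, abs_one, one_pow,
    abs_mul, Nat.abs_cast, Nat.abs_cast]
  ring

lemma besselJ_summand_summable (n : ℕ) (x : ℝ) :
    Summable (fun k : ℕ =>
      (-1) ^ k / ((Nat.factorial k : ℝ) * (Nat.factorial (k + n))) * (x / 2) ^ (2 * k + n)) := by
  apply Summable.of_norm
  have base : Summable (fun k : ℕ => ((x / 2) ^ 2) ^ k / (Nat.factorial k : ℝ)) :=
    Real.summable_pow_div_factorial _
  have base' : Summable (fun k : ℕ => |x / 2| ^ n * (((x / 2) ^ 2) ^ k / (Nat.factorial k : ℝ))) :=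
    base.mul_left _
  refine Summable.of_nonneg_of_le (fun k => norm_nonneg _) (fun k => ?_) base'
  have hfk : (0 : ℝ) < (Nat.factorial k : ℝ) := by positivity
  have hfkn : (1 : ℝ) ≤ (Nat.factorial (k + n) : ℝ) := by
    exact_mod_cast Nat.one_le_iff_ne_zero.mpr (Nat.factorial_ne_zero _)
  rw [norm_term]
  have hsplit : |x / 2| ^ (2 * k + n) = ((x / 2) ^ 2) ^ k * |x / 2| ^ n := by
    rw [pow_add, pow_mul, sq_abs]
  rw [hsplit]
  calc ((x / 2) ^ 2) ^ k * |x / 2| ^ n / ((Nat.factorial k : ℝ) * (Nat.factorial (k + n)))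
      ≤ ((x / 2) ^ 2) ^ k * |x / 2| ^ n / ((Nat.factorial k : ℝ) * 1) := by
        apply div_le_div_of_nonneg_left (by positivity) (by positivity)
        have := hfkn
        nlinarith
    _ = |x / 2| ^ n * (((x / 2) ^ 2) ^ k / (Nat.factorial k : ℝ)) := by ring

lemma besselJ_hasSum (n : ℕ) (x : ℝ) :
    HasSum (fun k : ℕ =>
      (-1) ^ k / ((Nat.factorial k : ℝ) * (Nat.factorial (k + n))) * (x / 2) ^ (2 * k + n))
      (besselJ n x) :=
  (besselJ_summand_summable n x).hasSum

lemma besselCoeff_hasSum (n : ℕ) (x : ℝ) :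
    HasSum (fun m : ℕ => besselCoeff n m * x ^ m) (besselJ n x) := by
  have hinj : Function.Injective (fun k : ℕ => 2 * k + n) := fun a b h => by
    simp only at h; omega
  refine (Function.Injective.hasSum_iff hinj ?_).mp ?_
  · intro m hm
    rw [besselCoeff_eq_zero n m hm, zero_mul]
  · have : (fun k : ℕ => besselCoeff n (2 * k + n) * x ^ (2 * k + n)) =
        (fun k : ℕ =>
          (-1) ^ k / ((Nat.factorial k : ℝ) * (Nat.factorial (k + n))) * (x / 2) ^ (2 * k + n)) := by
      funext k
      rw [besselCoeff_apply, div_pow]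
      have h1 : ((Nat.factorial k : ℝ) * (Nat.factorial (k + n))) ≠ 0 := by positivity
      have h2 : (2 : ℝ) ^ (2 * k + n) ≠ 0 := by positivity
      field_simp
      try ring
    have hs := besselJ_hasSum n x
    rw [← this] at hs
    exact hs

lemma besselJ_hasFPowerSeries (n : ℕ) :
    HasFPowerSeriesOnBall (besselJ n)
      (FormalMultilinearSeries.ofScalars ℝ (besselCoeff n)) 0 ⊤ := by
  have hrad : (FormalMultilinearSeries.ofScalars ℝ (besselCoeff n)).radius = ⊤ := by
    apply FormalMultilinearSeries.radius_eq_top_of_summable_norm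
    intro r
    have hinj : Function.Injective (fun k : ℕ => 2 * k + n) := fun a b h => by
      simp only at h; omega
    have habs : Summable (fun k : ℕ =>
        ‖(-1) ^ k / ((Nat.factorial k : ℝ) * (Nat.factorial (k + n))) *
          ((r : ℝ) / 2) ^ (2 * k + n)‖) :=
      (besselJ_summand_summable n r).norm
    have key : Summable (fun m : ℕ => |besselCoeff n m| * (r : ℝ) ^ m) := by
      refine (Function.Injective.summable_iff hinj ?_).mp ?_
      · intro m hm
        rw [besselCoeff_eq_zero n m hm, abs_zero, zero_mul]
      · refine habs.congr fun k => ?_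
        show ‖_‖ = |besselCoeff n (2 * k + n)| * (r : ℝ) ^ (2 * k + n)
        have hr : (0:ℝ) ≤ (r : ℝ) := r.coe_nonneg
        rw [norm_term, abs_of_nonneg (by positivity : (0:ℝ) ≤ (r : ℝ) / 2), div_pow,
          besselCoeff_apply, abs_div, abs_pow, abs_neg, abs_one, one_pow,
          abs_of_nonneg (by positivity :
            (0:ℝ) ≤ (Nat.factorial k : ℝ) * (Nat.factorial (k + n)) * 2 ^ (2 * k + n))]
        have h1 : ((Nat.factorial k : ℝ) * (Nat.factorial (k + n))) ≠ 0 := by positivity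
        have h2 : (2 : ℝ) ^ (2 * k + n) ≠ 0 := by positivity
        field_simp
    refine key.congr fun m => ?_
    rw [FormalMultilinearSeries.ofScalars_norm]
    rfl
  refine ⟨hrad ▸ le_refl _, by simp, fun {y} _ => ?_⟩
  simpa only [FormalMultilinearSeries.ofScalars_apply_eq, smul_eq_mul, zero_add]
    using besselCoeff_hasSum n y

lemma besselJ_contDiff (n : ℕ) (m : ℕ) : ContDiff ℝ m (besselJ n) := by
  refine contDiff_iff_contDiffAt.mpr fun x => ?_
  exact ((besselJ_hasFPowerSeries n).analyticAt_of_mem (by simp [edist_lt_top])).contDiffAt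

lemma besselJ_iteratedDeriv_zero (n m : ℕ) :
    iteratedDeriv m (besselJ n) 0 = (Nat.factorial m : ℝ) * besselCoeff n m := by
  have h := (besselJ_hasFPowerSeries n).factorial_smul (1 : ℝ) m
  rw [FormalMultilinearSeries.ofScalars_apply_eq] at h
  rw [iteratedDeriv_eq_iteratedFDeriv, ← h]
  simp [smul_eq_mul, mul_comm]

lemma iteratedDeriv_iteratedDeriv (f : ℝ → ℝ) (m k : ℕ) :
    iteratedDeriv m (iteratedDeriv k f) = iteratedDeriv (m + k) f := by
  simp only [iteratedDeriv_eq_iterate]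
  rw [← Function.iterate_add_apply]

lemma iteratedDeriv_const_mul' {f : ℝ → ℝ} {m : ℕ} (hf : ContDiff ℝ m f) (c : ℝ) (x : ℝ) :
    iteratedDeriv m (fun y => c * f y) x = c * iteratedDeriv m f x := by
  simp only [← iteratedDerivWithin_univ]
  exact iteratedDerivWithin_const_mul (Set.mem_univ x) uniqueDiffOn_univ c hf.contDiffWithinAt

lemma iteratedDeriv_finset_sum {ι : Type*} (s : Finset ι) (f : ι → ℝ → ℝ) (m : ℕ)
    (h : ∀ i ∈ s, ContDiff ℝ m (f i)) (x : ℝ) :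
    iteratedDeriv m (fun y => ∑ i ∈ s, f i y) x = ∑ i ∈ s, iteratedDeriv m (f i) x := by
  classical
  induction s using Finset.induction with
  | empty =>
      simp only [Finset.sum_empty]
      rw [iteratedDeriv_eq_iteratedFDeriv]
      rw [iteratedFDeriv_zero_fun]
      simp
  | @insert a s ha ih =>
      simp only [Finset.sum_insert ha]
      have hfa : ContDiff ℝ m (f a) := h a (Finset.mem_insert_self a s)
      have hfs : ContDiff ℝ m (fun y => ∑ i ∈ s, f i y) :=
        ContDiff.sum fun i hi => h i (Finset.mem_insert_of_mem hi)
      have hadd : iteratedDeriv m (fun y => f a y + ∑ i ∈ s, f i y) x =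
          iteratedDeriv m (f a) x + iteratedDeriv m (fun y => ∑ i ∈ s, f i y) x := by
        simp only [← iteratedDerivWithin_univ]
        exact iteratedDerivWithin_add (Set.mem_univ x) uniqueDiffOn_univ
          hfa.contDiffWithinAt hfs.contDiffWithinAt
      rw [hadd, ih fun i hi => h i (Finset.mem_insert_of_mem hi)]

/-- The `n+1` functions `J_n, J_n', …, J_n^{(n)}` are linearly independent over `ℝ`
as functions `ℝ → ℝ`. -/
theorem besselJ_derivs_linearIndependent (n : ℕ) :
    LinearIndependent ℝ (fun k : Fin (n + 1) => iteratedDeriv (k : ℕ) (besselJ n)) := by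
  rw [Fintype.linearIndependent_iff]
  intro g hg
  -- the linear combination vanishes as a function
  have hfun : (fun y => ∑ k : Fin (n + 1), g k * iteratedDeriv (k : ℕ) (besselJ n) y)
      = fun _ => (0 : ℝ) := by
    funext y
    have := congrFun hg y
    simpa [Finset.sum_apply] using this
  -- the row equations
  have row : ∀ m : ℕ, ∑ k : Fin (n + 1),
      g k * ((Nat.factorial (m + (k : ℕ)) : ℝ) * besselCoeff n (m + (k : ℕ))) = 0 := by
    intro m
    have hsmooth : ∀ k : Fin (n + 1), ContDiff ℝ m
        (fun y => g k * iteratedDeriv (k : ℕ) (besselJ n) y) := by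
      intro k
      have : ContDiff ℝ m (iteratedDeriv (k : ℕ) (besselJ n)) := by
        rw [iteratedDeriv_eq_iterate]
        exact ContDiff.iterate_deriv' m (k : ℕ) (besselJ_contDiff n (m + (k : ℕ)))
      exact contDiff_const.mul this
    have h1 := iteratedDeriv_finset_sum Finset.univ
      (fun k : Fin (n + 1) => fun y => g k * iteratedDeriv (k : ℕ) (besselJ n) y) m
      (fun k _ => hsmooth k) 0
    rw [hfun] at h1
    have h2 : iteratedDeriv m (fun _ : ℝ => (0:ℝ)) 0 = 0 := by
      rw [iteratedDeriv_eq_iteratedFDeriv, iteratedFDeriv_zero_fun]; simp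
    rw [h2] at h1
    have h3 : ∀ k : Fin (n + 1),
        iteratedDeriv m (fun y => g k * iteratedDeriv (k : ℕ) (besselJ n) y) 0
          = g k * ((Nat.factorial (m + (k : ℕ)) : ℝ) * besselCoeff n (m + (k : ℕ))) := by
      intro k
      have hck : ContDiff ℝ m (iteratedDeriv (k : ℕ) (besselJ n)) := by
        rw [iteratedDeriv_eq_iterate]
        exact ContDiff.iterate_deriv' m (k : ℕ) (besselJ_contDiff n (m + (k : ℕ)))
      rw [iteratedDeriv_const_mul' hck, iteratedDeriv_iteratedDeriv,
        besselJ_iteratedDeriv_zero]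
    calc ∑ k : Fin (n + 1),
          g k * ((Nat.factorial (m + (k : ℕ)) : ℝ) * besselCoeff n (m + (k : ℕ)))
        = ∑ k : Fin (n + 1),
            iteratedDeriv m (fun y => g k * iteratedDeriv (k : ℕ) (besselJ n) y) 0 :=
          Finset.sum_congr rfl fun k _ => (h3 k).symm
      _ = 0 := h1.symm
  -- diagonal coefficient is nonzero
  have hdiag : (Nat.factorial n : ℝ) * besselCoeff n n ≠ 0 := by
    have : besselCoeff n n =
        (-1) ^ 0 / (((Nat.factorial 0 : ℝ) * (Nat.factorial (0 + n))) * 2 ^ (2 * 0 + n)) := by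
      have := besselCoeff_apply n 0
      simpa using this
    rw [this]
    simp only [pow_zero, Nat.factorial_zero, Nat.cast_one, one_mul, zero_add, mul_zero]
    positivity
  -- below-diagonal coefficients vanish
  have hlow : ∀ m : ℕ, m < n → besselCoeff n m = 0 := by
    intro m hm
    rw [besselCoeff, if_neg]
    rintro ⟨h1, -⟩
    omega
  -- key step: if all later coefficients vanish, so does this one
  have key : ∀ j : Fin (n + 1), (∀ k : Fin (n + 1), (j : ℕ) < (k : ℕ) → g k = 0) → g j = 0 := by
    intro j hj
    have hrow := row (n - (j : ℕ))
    have hjle : (j : ℕ) ≤ n := Nat.lt_succ_iff.mp j.isLt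
    rw [Finset.sum_eq_single j] at hrow
    · have heq : n - (j : ℕ) + (j : ℕ) = n := Nat.sub_add_cancel hjle
      rw [heq] at hrow
      rcases mul_eq_zero.mp hrow with h | h
      · exact h
      · exact absurd h hdiag
    · intro k _ hk
      rcases Nat.lt_or_ge (k : ℕ) (j : ℕ) with hlt | hge
      · have : n - (j : ℕ) + (k : ℕ) < n := by omega
        rw [hlow _ this, mul_zero, mul_zero]
      · have hgt : (j : ℕ) < (k : ℕ) := by
          rcases Nat.eq_or_lt_of_le hge with h | h
          · exact absurd (Fin.ext h.symm) hk
          · exact h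
        rw [hj k hgt, zero_mul]
    · intro h
      exact absurd (Finset.mem_univ j) h
  -- downward induction
  have main : ∀ d : ℕ, ∀ j : Fin (n + 1), n - (j : ℕ) ≤ d → g j = 0 := by
    intro d
    induction d with
    | zero =>
        intro j hj
        refine key j fun k hk => ?_
        have := k.isLt
        omega
    | succ d ih =>
        intro j hj
        refine key j fun k hk => ?_
        refine ih k ?_
        have := k.isLt
        omega
  intro i
  exact main n i (by omega)
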